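/- Let E be a meagre equivalence relation on 2^ℕ × 2^ℕ containing E'_0. Then E_0 continuously reduces to E: there is a continuous function f : 2^ℕ → 2^ℕ such that for all α, β, α E_0 β iff f(α) E f(β). -/

import Mathlib

/-- `E₀`: eventual agreement on Cantor space `2^ℕ`. -/
def E0 (A B : ℕ → Bool) : Prop := ∃ n : ℕ, ∀ k : ℕ, n ≤ k → A k = B k

/-- Number of elements of `A` (as an element of `2^ℕ`) below `n`. -/
def cardBelow (n : ℕ) (A : ℕ → Bool) : ℕ :=
  ((Finset.range n).filter fun k => A k = true).card

/-- `E₀'` on `2^ℕ`: equal cardinality below some `n` and agreement from `n` on. -/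
def E0' (A B : ℕ → Bool) : Prop :=
  ∃ n : ℕ, cardBelow n A = cardBelow n B ∧ ∀ k : ℕ, n ≤ k → A k = B k


open Set

namespace E0Red

abbrev Cant := ℕ → Bool

/-- Cylinder determined by a finite list of bits. -/
def Cyl (L : List Bool) : Set Cant := {x | ∀ i < L.length, x i = L.getD i false}

lemma cyl_mono (L M : List Bool) : Cyl (L ++ M) ⊆ Cyl L := by
  intro x hx i hi
  have h := hx i (by simp; omega)
  rwa [List.getD_append _ _ _ _ hi] at h

lemma mem_cyl_self (L : List Bool) : (fun i => L.getD i false) ∈ Cyl L := fun i _ => rfl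

lemma isOpen_ball (x : Cant) (n : ℕ) : IsOpen {z : Cant | ∀ i < n, z i = x i} := by
  have : {z : Cant | ∀ i < n, z i = x i} = ⋂ i ∈ Finset.range n, {z : Cant | z i = x i} := by
    ext z; simp
  rw [this]
  refine isOpen_biInter_finset fun i _ => ?_
  have : {z : Cant | z i = x i} = (fun z : Cant => z i) ⁻¹' {x i} := by ext z; simp
  rw [this]
  exact (continuous_apply i).isOpen_preimage _ (isOpen_discrete _)

lemma isOpen_cyl (L : List Bool) : IsOpen (Cyl L) :=
  isOpen_ball (fun i => L.getD i false) L.length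

lemma exists_ball_subset {A : Set Cant} {x : Cant} (hA : A ∈ nhds x) :
    ∃ n, {z : Cant | ∀ i < n, z i = x i} ⊆ A := by
  rw [nhds_pi, Filter.mem_pi] at hA
  obtain ⟨I, hIfin, t, ht, hsub⟩ := hA
  refine ⟨hIfin.toFinset.sup id + 1, fun z hz => hsub fun i hi => ?_⟩
  have : i < hIfin.toFinset.sup id + 1 :=
    Nat.lt_succ_of_le (Finset.le_sup (f := id) (hIfin.mem_toFinset.mpr hi))
  rw [hz i this]
  exact mem_of_mem_nhds (ht i)

lemma exists_ball_subset2 {U : Set (Cant × Cant)} (hU : IsOpen U) {x y : Cant}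
    (hxy : (x, y) ∈ U) :
    ∃ n, {z : Cant | ∀ i < n, z i = x i} ×ˢ {z : Cant | ∀ i < n, z i = y i} ⊆ U := by
  have h := hU.mem_nhds hxy
  rw [mem_nhds_prod_iff] at h
  obtain ⟨u, hu, v, hv, hsub⟩ := h
  obtain ⟨n, hn⟩ := exists_ball_subset hu
  obtain ⟨m, hm⟩ := exists_ball_subset hv
  refine ⟨max n m, fun z hz => hsub ⟨hn fun i hi => ?_, hm fun i hi => ?_⟩⟩
  · exact hz.1 i (lt_of_lt_of_le hi (le_max_left _ _))
  · exact hz.2 i (lt_of_lt_of_le hi (le_max_right _ _))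

lemma cyl_map_range (x : Cant) (M : ℕ) :
    Cyl ((List.range M).map x) = {z : Cant | ∀ i < M, z i = x i} := by
  ext z
  simp only [Cyl, mem_setOf_eq, List.length_map, List.length_range]
  constructor
  · intro h i hi
    have := h i hi
    rwa [List.getD_eq_getElem _ _ (by simpa using hi), List.getElem_map,
      List.getElem_range] at this
  · intro h i hi
    rw [List.getD_eq_getElem _ _ (by simpa using hi), List.getElem_map, List.getElem_range]
    exact h i hi

lemma exists_ext_eq_map_range {a : List Bool} {x : Cant} (hx : x ∈ Cyl a) (M : ℕ)
    (hM : a.length ≤ M) : ∃ s, a ++ s = (List.range M).map x := by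
  refine ⟨((List.range M).map x).drop a.length, ?_⟩
  have ha : a = ((List.range M).map x).take a.length := by
    apply List.ext_getElem
    · simp [hM]
    · intro i hi _
      have := hx i hi
      rw [List.getD_eq_getElem _ _ hi] at this
      simp [List.getElem_take, this]
  nth_rewrite 1 [ha]
  exact List.take_append_drop _ _

/-- The key avoidance lemma: a closed nowhere dense set can be avoided by
extending any pair of cylinders. -/
lemma avoid {K : Set (Cant × Cant)} (hKc : IsClosed K) (hK : IsNowhereDense K)
    (a b : List Bool) : ∃ s t, (Cyl (a ++ s) ×ˢ Cyl (b ++ t)) ∩ K = ∅ := by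
  have hdense : Dense Kᶜ := by
    rw [← interior_eq_empty_iff_dense_compl]
    rwa [hKc.isNowhereDense_iff] at hK
  have hne : (Cyl a ×ˢ Cyl b).Nonempty :=
    ⟨((fun i => a.getD i false), (fun i => b.getD i false)), mem_cyl_self a, mem_cyl_self b⟩
  obtain ⟨⟨x, y⟩, hxyU, hxyK⟩ :=
    hdense.inter_open_nonempty _ ((isOpen_cyl a).prod (isOpen_cyl b)) hne
  obtain ⟨n, hn⟩ := exists_ball_subset2 hKc.isOpen_compl hxyK
  obtain ⟨s, hs⟩ := exists_ext_eq_map_range hxyU.1 (max n a.length) (le_max_right _ _)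
  obtain ⟨t, ht⟩ := exists_ext_eq_map_range hxyU.2 (max n b.length) (le_max_right _ _)
  refine ⟨s, t, ?_⟩
  rw [eq_empty_iff_forall_notMem]
  rintro ⟨p, q⟩ ⟨⟨hp, hq⟩, hpqK⟩
  rw [hs, cyl_map_range] at hp
  rw [ht, cyl_map_range] at hq
  exact hn ⟨fun i hi => hp i (lt_of_lt_of_le hi (le_max_left _ _)),
    fun i hi => hq i (lt_of_lt_of_le hi (le_max_left _ _))⟩ hpqK

lemma avoid_finset {ι : Type} (I : Finset ι) (a b : ι → List Bool)
    (K : ι → Set (Cant × Cant)) (hK : ∀ i, IsClosed (K i) ∧ IsNowhereDense (K i)) :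
    ∃ s t, ∀ i ∈ I, (Cyl (a i ++ s) ×ˢ Cyl (b i ++ t)) ∩ K i = ∅ := by
  classical
  induction I using Finset.cons_induction with
  | empty => exact ⟨[], [], by simp⟩
  | cons j I hjI ih =>
    obtain ⟨s, t, hst⟩ := ih
    obtain ⟨s', t', hst'⟩ := avoid (hK j).1 (hK j).2 (a j ++ s) (b j ++ t)
    refine ⟨s ++ s', t ++ t', fun i hi => ?_⟩
    rcases Finset.mem_cons.mp hi with rfl | hi
    · rw [← List.append_assoc, ← List.append_assoc]
      exact hst'
    · rw [eq_empty_iff_forall_notMem]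
      rintro ⟨p, q⟩ ⟨⟨hp, hq⟩, hpqK⟩
      have hp' : p ∈ Cyl (a i ++ s) := by
        rw [← List.append_assoc] at hp; exact cyl_mono _ _ hp
      have hq' : q ∈ Cyl (b i ++ t) := by
        rw [← List.append_assoc] at hq; exact cyl_mono _ _ hq
      exact (eq_empty_iff_forall_notMem.mp (hst i hi)) (p, q) ⟨⟨hp', hq'⟩, hpqK⟩


lemma cardBelow_eq_count (x : ℕ → Bool) (n : ℕ) :
    cardBelow n x = ((List.range n).map x).count true := by
  induction n with
  | zero => simp [cardBelow]
  | succ n ih =>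
    rw [List.range_succ, List.map_append, List.count_append]
    rw [cardBelow, Finset.range_add_one, Finset.filter_insert]
    by_cases h : x n = true
    · rw [if_pos h, Finset.card_insert_of_notMem (by simp)]
      simp [h, ← ih, cardBelow]
    · rw [if_neg h]
      have hx : x n = false := by
        cases hx' : x n
        · rfl
        · exact absurd hx' h
      simp [hx, ← ih, cardBelow]

lemma nwd_union {X : Type*} [TopologicalSpace X] {A B : Set X} (hA : IsClosed A)
    (hAn : interior A = ∅) (hB : IsClosed B) (hBn : interior B = ∅) :
    interior (A ∪ B) = ∅ := by
  have h1 : interior (A ∪ B) ∩ Aᶜ ⊆ interior B := by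
    apply interior_maximal
    · rintro x ⟨hx1, hx2⟩
      rcases interior_subset hx1 with h | h
      · exact absurd h hx2
      · exact h
    · exact isOpen_interior.inter hA.isOpen_compl
  have h2 : interior (A ∪ B) ⊆ A := by
    intro x hx
    by_contra hxA
    exact absurd (h1 ⟨hx, hxA⟩) (by rw [hBn]; exact notMem_empty x)
  have := interior_maximal h2 isOpen_interior
  rw [hAn] at this
  exact eq_empty_iff_forall_notMem.mpr fun x hx => this hx
def pick (b : List Bool × List Bool) (c : Bool) : List Bool := cond c b.2 b.1
def pad (s t : List Bool) : List Bool :=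
  s ++ (List.replicate (t.count true) true ++ List.replicate (t.length + s.count true + 1) false)
lemma pad_length (s t : List Bool) : (pad s t).length = (pad t s).length := by
  simp [pad]; omega

lemma pad_count (s t : List Bool) : (pad s t).count true = (pad t s).count true := by
  simp [pad, List.count_append, List.count_replicate]; omega

lemma pad_ne_nil (s t : List Bool) : pad s t ≠ [] := by simp [pad]
def preL (prev : List (List Bool × List Bool)) (α : Cant) : List Bool :=
  (((List.range prev.length)).map fun k => pick (prev.getD k ([], [])) (α k)).flatten
lemma preL_congr (prev : List (List Bool × List Bool)) {α β : Cant}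
    (h : ∀ k < prev.length, α k = β k) : preL prev α = preL prev β := by
  unfold preL
  congr 1
  exact List.map_congr_left fun k hk => by rw [h k (List.mem_range.mp hk)]

lemma preL_snoc (prev : List (List Bool × List Bool)) (b : List Bool × List Bool) (α : Cant) :
    preL (prev ++ [b]) α = preL prev α ++ pick b (α prev.length) := by
  unfold preL
  rw [List.length_append, List.length_singleton, List.range_succ, List.map_append,
    List.flatten_append]
  congr 2
  · exact List.map_congr_left fun k hk => by
      rw [List.getD_append _ _ _ _ (List.mem_range.mp hk)]
  · simp

section Construction

variable (G : ℕ → Set (Cant × Cant)) (hG : ∀ n, IsClosed (G n) ∧ IsNowhereDense (G n))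
include hG

/-- The property we need of each new pair of blocks. -/
def GoodBlock (prev : List (List Bool × List Bool)) (m : ℕ)
    (uv : List Bool × List Bool) : Prop :=
  uv.1.length = uv.2.length ∧ uv.1.count true = uv.2.count true ∧ uv.1 ≠ [] ∧
    ∀ α β : Cant, ∀ j ≤ m,
      (Cyl (preL prev α ++ uv.1) ×ˢ Cyl (preL prev β ++ uv.2)) ∩ G j = ∅

lemma exists_next (prev : List (List Bool × List Bool)) (m : ℕ) :
    ∃ uv, GoodBlock G prev m uv := by
  classical
  set L := prev.length with hL
  let ext : (Fin L → Bool) → Cant := fun v k => if h : k < L then v ⟨k, h⟩ else false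
  obtain ⟨s, t, hst⟩ := avoid_finset
    (Finset.univ : Finset ((Fin L → Bool) × (Fin L → Bool) × Fin (m + 1)))
    (fun i => preL prev (ext i.1)) (fun i => preL prev (ext i.2.1))
    (fun i => G i.2.2) (fun i => hG i.2.2)
  refine ⟨(pad s t, pad t s), pad_length s t, pad_count s t, pad_ne_nil s t, ?_⟩
  intro α β j hj
  have key := hst ((fun k : Fin L => α k), (fun k : Fin L => β k), ⟨j, by omega⟩)
    (Finset.mem_univ _)
  simp only at key
  have hα : preL prev (ext fun k : Fin L => α k.1) = preL prev α :=
    preL_congr prev fun k hk => by have hk' : k < L := hk; simp [ext, hk']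
  have hβ : preL prev (ext fun k : Fin L => β k.1) = preL prev β :=
    preL_congr prev fun k hk => by have hk' : k < L := hk; simp [ext, hk']
  rw [hα, hβ] at key
  rw [eq_empty_iff_forall_notMem]
  rintro ⟨p, q⟩ ⟨⟨hp, hq⟩, hpq⟩
  have hp' : p ∈ Cyl (preL prev α ++ s) := by
    have : preL prev α ++ pad s t = (preL prev α ++ s) ++ (List.replicate (t.count true) true
        ++ List.replicate (t.length + s.count true + 1) false) := by
      simp [pad]
    rw [this] at hp
    exact cyl_mono _ _ hp
  have hq' : q ∈ Cyl (preL prev β ++ t) := by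
    have : preL prev β ++ pad t s = (preL prev β ++ t) ++ (List.replicate (s.count true) true
        ++ List.replicate (s.length + t.count true + 1) false) := by
      simp [pad]
    rw [this] at hq
    exact cyl_mono _ _ hq
  exact (eq_empty_iff_forall_notMem.mp key) (p, q) ⟨⟨hp', hq'⟩, hpq⟩

/-- The chosen next block. -/
noncomputable def nextBlock (prev : List (List Bool × List Bool)) (m : ℕ) :
    List Bool × List Bool :=
  Classical.choose (exists_next G hG prev m)

lemma nextBlock_spec (prev : List (List Bool × List Bool)) (m : ℕ) :
    GoodBlock G prev m (nextBlock G hG prev m) :=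
  Classical.choose_spec (exists_next G hG prev m)

/-- Stages of the construction: the list of the first `m` blocks. -/
noncomputable def stages : ℕ → List (List Bool × List Bool)
  | 0 => []
  | m + 1 => stages m ++ [nextBlock G hG (stages m) m]

/-- The `m`-th block pair. -/
noncomputable def blk (m : ℕ) : List Bool × List Bool := nextBlock G hG (stages G hG m) m

lemma stages_succ (m : ℕ) : stages G hG (m + 1) = stages G hG m ++ [blk G hG m] := rfl

lemma stages_length (m : ℕ) : (stages G hG m).length = m := by
  induction m with
  | zero => rfl
  | succ m ih => rw [stages_succ, List.length_append, ih]; rfl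

lemma blk_spec (m : ℕ) : GoodBlock G (stages G hG m) m (blk G hG m) :=
  nextBlock_spec G hG (stages G hG m) m

/-- Partial output at stage `m`. -/
noncomputable def Pre (m : ℕ) (α : Cant) : List Bool := preL (stages G hG m) α

lemma Pre_succ (m : ℕ) (α : Cant) :
    Pre G hG (m + 1) α = Pre G hG m α ++ pick (blk G hG m) (α m) := by
  unfold Pre
  rw [stages_succ, preL_snoc, stages_length]

lemma Pre_congr (m : ℕ) {α β : Cant} (h : ∀ k < m, α k = β k) :
    Pre G hG m α = Pre G hG m β :=
  preL_congr _ (by rwa [stages_length])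

lemma pick_length (m : ℕ) (c : Bool) : (pick (blk G hG m) c).length = (blk G hG m).1.length := by
  cases c
  · rfl
  · exact ((blk_spec G hG m).1).symm

lemma pick_count (m : ℕ) (c : Bool) :
    (pick (blk G hG m) c).count true = (blk G hG m).1.count true := by
  cases c
  · rfl
  · exact ((blk_spec G hG m).2.1).symm

lemma pick_ne_nil (m : ℕ) (c : Bool) : pick (blk G hG m) c ≠ [] := by
  have h1 := (blk_spec G hG m).2.2.1
  have := pick_length G hG m c
  intro hc
  rw [hc] at this
  exact h1 (List.eq_nil_of_length_eq_zero this.symm)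

lemma Pre_length_eq (m : ℕ) (α β : Cant) : (Pre G hG m α).length = (Pre G hG m β).length := by
  induction m with
  | zero => rfl
  | succ m ih => rw [Pre_succ, Pre_succ, List.length_append, List.length_append, ih,
      pick_length, pick_length]

lemma Pre_count_eq (m : ℕ) (α β : Cant) :
    (Pre G hG m α).count true = (Pre G hG m β).count true := by
  induction m with
  | zero => rfl
  | succ m ih => rw [Pre_succ, Pre_succ, List.count_append, List.count_append, ih,
      pick_count, pick_count]

lemma le_Pre_length (m : ℕ) (α : Cant) : m ≤ (Pre G hG m α).length := by
  induction m with
  | zero => exact Nat.zero_le _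
  | succ m ih =>
    rw [Pre_succ, List.length_append]
    have := pick_ne_nil G hG m (α m)
    have h2 : 0 < (pick (blk G hG m) (α m)).length := List.length_pos_iff.mpr this
    omega

lemma Pre_prefix {m m' : ℕ} (h : m ≤ m') (α : Cant) :
    ∃ C, Pre G hG m' α = Pre G hG m α ++ C := by
  induction m' , h using Nat.le_induction with
  | base => exact ⟨[], by simp⟩
  | succ m' hm ih =>
    obtain ⟨C, hC⟩ := ih
    exact ⟨C ++ pick (blk G hG m') (α m'), by rw [Pre_succ, hC, List.append_assoc]⟩


/-- The reduction function. -/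
noncomputable def ff (α : Cant) : Cant := fun n => (Pre G hG (n + 1) α).getD n false

lemma getD_of_le {a b : ℕ} (h : a ≤ b) (α : Cant) {k : ℕ} (hk : k < (Pre G hG a α).length) :
    (Pre G hG b α).getD k false = (Pre G hG a α).getD k false := by
  obtain ⟨C, hC⟩ := Pre_prefix G hG h α
  rw [hC, List.getD_append _ _ _ _ hk]

lemma ff_getD {m n : ℕ} (α : Cant) (h : n < (Pre G hG m α).length) :
    ff G hG α n = (Pre G hG m α).getD n false := by
  show (Pre G hG (n + 1) α).getD n false = (Pre G hG m α).getD n false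
  rcases le_total m (n + 1) with h1 | h1
  · exact getD_of_le G hG h1 α h
  · exact (getD_of_le G hG h1 α
      (lt_of_lt_of_le (Nat.lt_succ_self n) (le_Pre_length G hG _ α))).symm

lemma ff_mem_cyl (m : ℕ) (α : Cant) : ff G hG α ∈ Cyl (Pre G hG m α) :=
  fun i hi => ff_getD G hG α hi

lemma map_range_ff (n : ℕ) (α : Cant) :
    (List.range (Pre G hG n α).length).map (ff G hG α) = Pre G hG n α := by
  apply List.ext_getElem
  · simp
  · intro i h1 h2
    rw [List.getElem_map, List.getElem_range]
    rw [ff_getD G hG α (by simpa using h2), List.getD_eq_getElem _ _ (by simpa using h2)]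

lemma tail_eq {n : ℕ} {α β : Cant} (hag : ∀ k, n ≤ k → α k = β k) :
    ∀ m, n ≤ m → ∃ C, Pre G hG m α = Pre G hG n α ++ C ∧ Pre G hG m β = Pre G hG n β ++ C := by
  intro m hm
  induction m, hm using Nat.le_induction with
  | base => exact ⟨[], by simp⟩
  | succ m hm ih =>
    obtain ⟨C, hC1, hC2⟩ := ih
    refine ⟨C ++ pick (blk G hG m) (α m), ?_, ?_⟩
    · rw [Pre_succ, hC1, List.append_assoc]
    · rw [Pre_succ, hC2, List.append_assoc, hag m hm]

lemma ff_E0' {α β : Cant} (h : E0 α β) : E0' (ff G hG α) (ff G hG β) := by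
  obtain ⟨n, hag⟩ := h
  refine ⟨(Pre G hG n α).length, ?_, ?_⟩
  · rw [cardBelow_eq_count, cardBelow_eq_count, map_range_ff,
      Pre_length_eq G hG n α β, map_range_ff]
    exact Pre_count_eq G hG n α β
  · intro k hk
    set m := max n (k + 1) with hm
    obtain ⟨C, hC1, hC2⟩ := tail_eq G hG hag m (le_max_left _ _)
    have hkα : k < (Pre G hG m α).length :=
      lt_of_lt_of_le (by omega : k < m) (le_Pre_length G hG m α)
    have hkβ : k < (Pre G hG m β).length := by
      rwa [Pre_length_eq G hG m β α]
    rw [ff_getD G hG α hkα, ff_getD G hG β hkβ, hC1, hC2,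
      List.getD_append_right _ _ _ _ (by omega),
      List.getD_append_right _ _ _ _ (by rw [Pre_length_eq G hG n β α]; omega),
      Pre_length_eq G hG n β α]

lemma ff_avoid {α β : Cant} (hne : ∀ n, ∃ k, n ≤ k ∧ α k ≠ β k)
    (hsym : ∀ j (x y : Cant), (x, y) ∈ G j → (y, x) ∈ G j) :
    ∀ j, (ff G hG α, ff G hG β) ∉ G j := by
  intro j hmem
  obtain ⟨m, hm, hne'⟩ := hne j
  have spec := (blk_spec G hG m).2.2.2
  have hmemα := ff_mem_cyl G hG (m + 1) α
  have hmemβ := ff_mem_cyl G hG (m + 1) β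
  rw [Pre_succ] at hmemα hmemβ
  cases hα : α m
  · have hβ : β m = true := by
      cases hβ' : β m
      · exact absurd (hα.trans hβ'.symm) hne'
      · rfl
    rw [hα] at hmemα; rw [hβ] at hmemβ
    exact (eq_empty_iff_forall_notMem.mp (spec α β j hm)) (ff G hG α, ff G hG β)
      ⟨⟨hmemα, hmemβ⟩, hmem⟩
  · have hβ : β m = false := by
      cases hβ' : β m
      · rfl
      · exact absurd (hα.trans hβ'.symm) hne'
    rw [hα] at hmemα; rw [hβ] at hmemβ
    exact (eq_empty_iff_forall_notMem.mp (spec β α j hm)) (ff G hG β, ff G hG α)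
      ⟨⟨hmemβ, hmemα⟩, hsym j _ _ hmem⟩

lemma ff_continuous : Continuous (ff G hG) := by
  apply continuous_pi
  intro n
  apply IsLocallyConstant.continuous (f := fun α => ff G hG α n)
  rw [IsLocallyConstant.iff_exists_open]
  intro α
  refine ⟨{z : Cant | ∀ i < n + 1, z i = α i}, isOpen_ball α (n + 1), fun i _ => rfl, ?_⟩
  intro β hβ
  show (Pre G hG (n + 1) β).getD n false = (Pre G hG (n + 1) α).getD n false
  rw [Pre_congr G hG (n + 1) (fun k hk => hβ k hk)]

end Construction
end E0Red

/-- If `E` is a meagre equivalence relation on `2^ℕ` containing `E₀'`, then `E₀`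
continuously reduces to `E`. -/
theorem E0_reduces_to_meagre_equiv (E : (ℕ → Bool) → (ℕ → Bool) → Prop)
    (hE : Equivalence E)
    (hmeagre : IsMeagre {p : (ℕ → Bool) × (ℕ → Bool) | E p.1 p.2})
    (hE0' : ∀ A B : ℕ → Bool, E0' A B → E A B) :
    ∃ f : (ℕ → Bool) → (ℕ → Bool), Continuous f ∧
      ∀ α β : ℕ → Bool, E0 α β ↔ E (f α) (f β) := by
  classical
  obtain ⟨S, hSnwd, hScnt, hScov⟩ := isMeagre_iff_countable_union_isNowhereDense.mp hmeagre
  have hS'cnt : (insert (∅ : Set (E0Red.Cant × E0Red.Cant)) S).Countable := hScnt.insert _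
  obtain ⟨F, hF⟩ := hS'cnt.exists_eq_range ⟨∅, Set.mem_insert _ _⟩
  have hFnwd : ∀ n, IsNowhereDense (F n) := by
    intro n
    have hmem : F n ∈ insert (∅ : Set (E0Red.Cant × E0Red.Cant)) S := by
      rw [hF]; exact Set.mem_range_self n
    rcases Set.mem_insert_iff.mp hmem with h | h
    · rw [h]; exact isNowhereDense_empty
    · exact hSnwd _ h
  set G : ℕ → Set (E0Red.Cant × E0Red.Cant) :=
    fun n => closure (F n) ∪ Prod.swap ⁻¹' closure (F n) with hGdef
  have hGcl : ∀ n, IsClosed (G n) := fun n =>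
    isClosed_closure.union (isClosed_closure.preimage continuous_swap)
  have hswap : ∀ n, Prod.swap ⁻¹' closure (F n)
      = (Homeomorph.prodComm E0Red.Cant E0Red.Cant) ⁻¹' closure (F n) := fun n => rfl
  have hGnwd : ∀ n, IsNowhereDense (G n) := by
    intro n
    rw [(hGcl n).isNowhereDense_iff]
    apply E0Red.nwd_union isClosed_closure _ (isClosed_closure.preimage continuous_swap)
    · rw [hswap, ← Homeomorph.preimage_interior]
      have : interior (closure (F n)) = ∅ := hFnwd n
      rw [this, Set.preimage_empty]
    · rw [← closure_closure (s := F n)]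
      exact (hFnwd n).closure
  have hG : ∀ n, IsClosed (G n) ∧ IsNowhereDense (G n) := fun n => ⟨hGcl n, hGnwd n⟩
  have hGsym : ∀ j (x y : E0Red.Cant), (x, y) ∈ G j → (y, x) ∈ G j := by
    intro j x y h
    rcases h with h | h
    · exact Or.inr h
    · exact Or.inl h
  have hGcov : ∀ x y : E0Red.Cant, E x y → ∃ j, (x, y) ∈ G j := by
    intro x y hxy
    obtain ⟨t, htS, hxt⟩ := hScov (show ((x, y) : E0Red.Cant × E0Red.Cant) ∈ {p | E p.1 p.2} from hxy)
    have : t ∈ Set.range F := by rw [← hF]; exact Set.mem_insert_of_mem _ htS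
    obtain ⟨n, rfl⟩ := this
    exact ⟨n, Or.inl (subset_closure hxt)⟩
  refine ⟨E0Red.ff G hG, E0Red.ff_continuous G hG, fun α β => ⟨?_, ?_⟩⟩
  · intro h
    exact hE0' _ _ (E0Red.ff_E0' G hG h)
  · intro h
    by_contra hne
    have hne' : ∀ n, ∃ k, n ≤ k ∧ α k ≠ β k := by
      intro n
      by_contra hc
      push_neg at hc
      exact hne ⟨n, hc⟩
    obtain ⟨j, hj⟩ := hGcov _ _ h
    exact E0Red.ff_avoid G hG hne' hGsym j hj
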